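/- Let $m\geq 1$, $z = \exp(i\pi/m)$, $0\leq k_1 < \cdots < k_m \leq 2m-1$. Let $\mathbb{P}_{\beta\alpha} = \frac{1}{1+z^{\beta-\alpha}}$ and $\mathbb{B} = \mathbb{W}\,\mathrm{diag}[(-1)^{k_1},\dots,(-1)^{k_m}]\,\mathbb{W}^{-1}$, where $\mathbb{W}$ is the Vandermonde matrix of $z^{k_1},\dots,z^{k_m}$. Then $\mathrm{Sp}(\mathbb{P}\mathbb{B}) = \frac{m(2m-1)}{2} - \sum_{j=1}^m k_j$. -/

import Mathlib

open Complex Matrix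

section Helpers
open Finset
lemma geom_vanish (u : ℂ) (n : ℕ) (hu1 : u ≠ 1) (hun : u ^ n = 1) :
    ∑ t ∈ range n, u ^ t = 0 := by
  rw [geom_sum_eq hu1, hun, sub_self, zero_div]

lemma fourier_inv (m : ℕ) (u : ℂ) (hu2m : u ^ (2*m) = 1) (hu : u ≠ -1) :
    (1 + u) * ∑ t ∈ range (2*m), (-1 : ℂ)^t * t * u^t = -(2*m : ℂ) := by
  have h1 : (-1 : ℂ)^(2*m) = 1 := by rw [pow_mul]; norm_num
  have hneg : (-u) ^ (2*m) = 1 := by rw [neg_pow, hu2m, h1, one_mul]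
  have hne1 : (-u : ℂ) ≠ 1 := by intro h; apply hu; linear_combination -h
  set g : ℕ → ℂ := fun s => (-1 : ℂ)^s * s * u^s with hg
  have huS : u * ∑ t ∈ range (2*m), g t
      = -(∑ t ∈ range (2*m), g (t+1)) + ∑ t ∈ range (2*m), (-u)^(t+1) := by
    rw [Finset.mul_sum, ← Finset.sum_neg_distrib, ← Finset.sum_add_distrib]
    refine Finset.sum_congr rfl fun t _ => ?_
    simp only [hg, pow_succ]
    push_cast; ring
  have hshift : ∑ t ∈ range (2*m), g (t+1) = (∑ t ∈ range (2*m), g t) + g (2*m) := by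
    have h0 : g 0 = 0 := by simp [hg]
    have ha := Finset.sum_range_succ' g (2*m)
    rw [Finset.sum_range_succ g (2*m), h0, add_zero] at ha
    exact ha.symm
  have hgeom : ∑ t ∈ range (2*m), (-u)^(t+1) = 0 := by
    have h2 : ∑ t ∈ range (2*m), (-u)^(t+1) = (-u) * ∑ t ∈ range (2*m), (-u)^t := by
      rw [Finset.mul_sum]; exact Finset.sum_congr rfl fun t _ => by ring
    rw [h2, geom_vanish _ _ hne1 hneg, mul_zero]
  have hg2m : g (2*m) = 2*m := by
    simp only [hg, hu2m, h1, one_mul, mul_one]; push_cast; ring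
  calc (1 + u) * ∑ t ∈ range (2*m), g t
      = (∑ t ∈ range (2*m), g t) + u * ∑ t ∈ range (2*m), g t := by ring
    _ = -(2*m : ℂ) := by rw [huS, hshift, hgeom, hg2m]; ring

lemma sum_Ioc_int' (F : ℤ → ℂ) (a : ℤ) (n : ℕ) :
    ∑ d ∈ Finset.Ioc a (a + n), F d = ∑ s ∈ Finset.range n, F (a + 1 + s) := by
  induction n with
  | zero => simp
  | succ n ih =>
      have h1 : (a + (n+1 : ℕ) : ℤ) = (a + n) + 1 := by push_cast; ring
      have h2 : Finset.Ioc a ((a:ℤ)+n+1) = insert ((a:ℤ)+n+1) (Finset.Ioc a (a+n)) := by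
        ext x; simp [Finset.mem_Ioc, Finset.mem_insert]; omega
      rw [h1, h2, Finset.sum_insert (by simp), ih, Finset.sum_range_succ]
      have h3 : (a + 1 + (n:ℤ)) = a + n + 1 := by ring
      rw [h3, add_comm]

lemma inner_geom (m : ℕ) (hm : 1 ≤ m) (ω : ℂ) (hω0 : ω ≠ 0) (hω1 : ω ≠ 1)
    (hω2m : ω ^ (2*m) = 1) :
    ∑ d ∈ Finset.Ioc (-(m:ℤ)) ((m:ℤ)-1), ω ^ d = -ω ^ (m : ℕ) := by
  have hlen : ((m:ℤ)-1) = -(m:ℤ) + (2*m-1 : ℕ) := by push_cast; omega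
  rw [hlen, sum_Ioc_int']
  have hred : ∀ s : ℕ, ω ^ (-(m:ℤ) + 1 + s) = ω^(1:ℤ)/(ω^(m:ℕ)) * ω^s := by
    intro s
    rw [zpow_add₀ hω0, zpow_add₀ hω0, zpow_natCast]
    rw [_root_.zpow_neg, zpow_natCast]
    field_simp
  simp only [hred]
  rw [← Finset.mul_sum, geom_sum_eq hω1]
  have hinv : ω ^ (2*m-1) = ω⁻¹ := by
    refine eq_inv_of_mul_eq_one_left ?_
    rw [← pow_succ]
    have : 2*m-1+1 = 2*m := by omega
    rw [this, hω2m]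
  rw [hinv]
  have hsq : ω^m * ω^m = 1 := by rw [← pow_add]; have : m + m = 2*m := by omega
                                 rw [this, hω2m]
  have hω1' : ω - 1 ≠ 0 := sub_ne_zero.mpr hω1
  field_simp
  linear_combination (ω - 1) * hω2m

lemma neg_one_sq_pow (t : ℕ) : ((-1:ℂ))^t * (-1:ℂ)^t = 1 := by
  rw [← mul_pow]; norm_num

lemma L2 (m : ℕ) (hm : 1 ≤ m) (z : ℂ) (hz0 : z ≠ 0) (hz2m : z ^ (2*m) = 1)
    (hzm : z ^ m = -1) (hdvd : ∀ a : ℤ, z ^ a = 1 ↔ (2*m : ℤ) ∣ a)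
    (K : ℕ) (hK : K < 2*m) :
    ∑ d ∈ Finset.Ioc (-(m:ℤ)) ((m:ℤ)-1), 1/(1 + z^d) * ((z:ℂ)^(K:ℕ))^((m:ℤ)-d)
      = (2*(m:ℂ) - 1)/2 - K := by
  have hm0 : (m:ℂ) ≠ 0 := Nat.cast_ne_zero.mpr (by omega)
  have h2m0 : (2*(m:ℂ)) ≠ 0 := by simp [hm0]
  have hne : ∀ d ∈ Finset.Ioc (-(m:ℤ)) ((m:ℤ)-1), (1:ℂ) + z^d ≠ 0 := by
    intro d hd h
    rw [Finset.mem_Ioc] at hd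
    have hzd : z^d = -1 := by linear_combination h
    have h1 : z^(d - (m:ℤ)) = 1 := by
      rw [zpow_sub₀ hz0, hzd, zpow_natCast, hzm]; norm_num
    rcases (hdvd _).mp h1 with ⟨c, hc⟩
    rcases lt_or_ge c 0 with h'|h'
    · have : c ≤ -1 := by omega
      nlinarith [hd.1, hd.2]
    · nlinarith [hd.1, hd.2]
  have hu2m : ∀ d : ℤ, (z^d) ^ (2*m) = 1 := by
    intro d
    rw [← zpow_natCast (z^d) (2*m), ← _root_.zpow_mul, mul_comm, _root_.zpow_mul, zpow_natCast, hz2m, _root_.one_zpow]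
  have hzXm : ∀ n : ℕ, z^((n:ℤ)*(m:ℤ)) = (-1:ℂ)^n := by
    intro n
    rw [mul_comm, _root_.zpow_mul, zpow_natCast z m, hzm, zpow_natCast (-1:ℂ) n]
  have step1 : ∑ d ∈ Finset.Ioc (-(m:ℤ)) ((m:ℤ)-1), 1/(1 + z^d) * ((z:ℂ)^(K:ℕ))^((m:ℤ)-d)
      = ∑ d ∈ Finset.Ioc (-(m:ℤ)) ((m:ℤ)-1), ∑ t ∈ Finset.range (2*m),
          (-1/(2*(m:ℂ))) * ((-1:ℂ)^t * t * (z^d)^t * ((z:ℂ)^(K:ℕ))^((m:ℤ)-d)) := by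
    refine Finset.sum_congr rfl fun d hd => ?_
    have hd1 : (1:ℂ) + z^d ≠ 0 := hne d hd
    have hu : z^d ≠ -1 := fun h => hd1 (by rw [h]; ring)
    have hA := fourier_inv m (z^d) (hu2m d) hu
    have hS : ∑ t ∈ Finset.range (2*m), (-1:ℂ)^t * t * (z^d)^t = -(2*(m:ℂ))/(1+z^d) := by
      rw [eq_div_iff hd1]; linear_combination hA
    have hshape : ∑ t ∈ Finset.range (2*m),
        (-1/(2*(m:ℂ))) * ((-1:ℂ)^t * t * (z^d)^t * ((z:ℂ)^(K:ℕ))^((m:ℤ)-d))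
        = (-1/(2*(m:ℂ))) * ((∑ t ∈ Finset.range (2*m), (-1:ℂ)^t * t * (z^d)^t)
            * ((z:ℂ)^(K:ℕ))^((m:ℤ)-d)) := by
      rw [Finset.sum_mul, Finset.mul_sum]
    rw [hshape, hS]
    field_simp
  rw [step1, Finset.sum_comm]
  have hKmem : K ∈ Finset.range (2*m) := Finset.mem_range.mpr hK
  have inner : ∀ t ∈ Finset.range (2*m),
      (∑ d ∈ Finset.Ioc (-(m:ℤ)) ((m:ℤ)-1),
        (-1/(2*(m:ℂ))) * ((-1:ℂ)^t * t * (z^d)^t * ((z:ℂ)^(K:ℕ))^((m:ℤ)-d)))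
      = if t = K then -(K:ℂ)*(2*(m:ℂ)-1)/(2*m) else (t:ℂ)/(2*m) := by
    intro t ht
    rw [Finset.mem_range] at ht
    have hcomb : ∀ d : ℤ, (z^d)^(t:ℕ) * ((z:ℂ)^(K:ℕ))^((m:ℤ)-d)
        = z^((K:ℤ)*(m:ℤ)) * (z^((t:ℤ)-(K:ℤ)))^d := by
      intro d
      rw [← zpow_natCast (z^d) t, ← _root_.zpow_mul, ← zpow_natCast z K,
        ← _root_.zpow_mul z (K:ℤ) ((m:ℤ)-d), ← zpow_add₀ hz0,
        ← _root_.zpow_mul z ((t:ℤ)-(K:ℤ)) d, ← zpow_add₀ hz0]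
      congr 1; ring
    by_cases htK : t = K
    · subst htK
      rw [if_pos rfl]
      have e1 : ∀ d : ℤ, (z^d)^(t:ℕ) * ((z:ℂ)^(t:ℕ))^((m:ℤ)-d) = (-1:ℂ)^t := by
        intro d
        rw [hcomb d, sub_self, zpow_zero, _root_.one_zpow, mul_one, hzXm t]
      have e2 : ∀ d ∈ Finset.Ioc (-(m:ℤ)) ((m:ℤ)-1),
          (-1/(2*(m:ℂ))) * ((-1:ℂ)^t * t * (z^d)^t * ((z:ℂ)^(t:ℕ))^((m:ℤ)-d))
          = (-1/(2*(m:ℂ))) * ((-1:ℂ)^t * t * ((-1:ℂ)^t)) := by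
        intro d _
        linear_combination (-1/(2*(m:ℂ)) * ((-1:ℂ)^t * (t:ℂ))) * e1 d
      rw [Finset.sum_congr rfl e2, Finset.sum_const]
      have hcard : (Finset.Ioc (-(m:ℤ)) ((m:ℤ)-1)).card = 2*m-1 := by
        rw [Int.card_Ioc]; omega
      rw [hcard, nsmul_eq_mul]
      have hcast : ((2*m-1 : ℕ) : ℂ) = 2*(m:ℂ)-1 := by
        push_cast [Nat.cast_sub (by omega : 1 ≤ 2*m)]; ring
      rw [hcast]
      have ha := neg_one_sq_pow t
      linear_combination (-(2*(m:ℂ)-1) * (t:ℂ)/(2*(m:ℂ))) * ha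
    · rw [if_neg htK]
      have hω0 : z^((t:ℤ)-(K:ℤ)) ≠ 0 := zpow_ne_zero _ hz0
      have hω1 : z^((t:ℤ)-(K:ℤ)) ≠ 1 := by
        intro h
        rcases (hdvd _).mp h with ⟨c, hc⟩
        rcases lt_or_ge c 0 with h'|h'
        · have : c ≤ -1 := by omega
          nlinarith
        · rcases eq_or_lt_of_le h' with h0|h0
          · rw [← h0, mul_zero] at hc
            apply htK; omega
          · have : 1 ≤ c := by omega
            nlinarith
      have hω2m : (z^((t:ℤ)-(K:ℤ))) ^ (2*m) = 1 := hu2m _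
      have hωm : (z^((t:ℤ)-(K:ℤ))) ^ (m:ℕ) = (-1:ℂ)^t * (-1:ℂ)^K := by
        have e0 : (z^((t:ℤ)-(K:ℤ)))^(m:ℕ) = z^(((t:ℤ)-(K:ℤ))*(m:ℤ)) := by
          rw [← zpow_natCast (z^((t:ℤ)-(K:ℤ))) m, ← _root_.zpow_mul]
        rw [e0, sub_mul, zpow_sub₀ hz0, hzXm t, hzXm K]
        rw [div_eq_mul_inv, ← inv_pow, inv_neg, inv_one]
      have hconst : ∀ d ∈ Finset.Ioc (-(m:ℤ)) ((m:ℤ)-1),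
          (-1/(2*(m:ℂ))) * ((-1:ℂ)^t * t * (z^d)^t * ((z:ℂ)^(K:ℕ))^((m:ℤ)-d))
          = ((-1/(2*(m:ℂ))) * ((-1:ℂ)^t * t * z^((K:ℤ)*(m:ℤ)))) * (z^((t:ℤ)-(K:ℤ)))^d := by
        intro d _
        linear_combination (-1/(2*(m:ℂ)) * ((-1:ℂ)^t * (t:ℂ))) * hcomb d
      rw [Finset.sum_congr rfl hconst, ← Finset.mul_sum,
        inner_geom m hm _ hω0 hω1 hω2m, hωm, hzXm K]
      have ha := neg_one_sq_pow t
      have hb := neg_one_sq_pow K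
      linear_combination ((t:ℂ)/(2*(m:ℂ))) * (-1:ℂ)^t * (-1:ℂ)^t * hb + ((t:ℂ)/(2*(m:ℂ))) * ha
  rw [Finset.sum_congr rfl inner]
  rw [← Finset.add_sum_erase _ _ hKmem, if_pos rfl]
  have herase : ∑ t ∈ (Finset.range (2*m)).erase K,
      (if t = K then -(K:ℂ)*(2*(m:ℂ)-1)/(2*m) else (t:ℂ)/(2*m))
      = ∑ t ∈ (Finset.range (2*m)).erase K, (t:ℂ)/(2*m) := by
    refine Finset.sum_congr rfl fun t ht => ?_
    rw [if_neg (Finset.mem_erase.mp ht).1]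
  rw [herase, Finset.sum_erase_eq_sub hKmem]
  have hgauss : (∑ t ∈ Finset.range (2*m), (t:ℂ)) = (2*(m:ℂ))*(2*(m:ℂ)-1)/2 := by
    have h := Finset.sum_range_id_mul_two (2*m)
    have h2 := congrArg (Nat.cast : ℕ → ℂ) h
    push_cast [Nat.cast_sub (by omega : 1 ≤ 2*m)] at h2
    linear_combination h2/2
  have hsumdiv : ∑ t ∈ Finset.range (2*m), (t:ℂ)/(2*m)
      = (∑ t ∈ Finset.range (2*m), (t:ℂ))/(2*m) := by
    rw [Finset.sum_div]
  rw [hsumdiv, hgauss]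
  field_simp
  ring

lemma sum_Ioc_consec_int (f : ℤ → ℂ) {a b c : ℤ} (h1 : a ≤ b) (h2 : b ≤ c) :
    ∑ i ∈ Finset.Ioc a b, f i + ∑ i ∈ Finset.Ioc b c, f i = ∑ i ∈ Finset.Ioc a c, f i := by
  rw [← Finset.sum_union (by
      rw [Finset.disjoint_left]; intro x hx hx'
      simp only [Finset.mem_Ioc] at hx hx'; omega),
    Finset.Ioc_union_Ioc_eq_Ioc h1 h2]

lemma L1 (m : ℕ) (hm : 1 ≤ m) (c : ℤ → ℂ) (x : ℂ) (hx0 : x ≠ 0)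
    (hx : x ^ (2*m) = 1) (hc : ∀ d : ℤ, c (d + (2*m:ℕ)) = c d) (β : ℕ) (hβ : β < m) :
    ∑ α ∈ Finset.range m, c ((β:ℤ) - α) * x ^ ((α:ℤ) + m)
      + ∑ γ ∈ Finset.range m, (if γ = β then 0 else c ((m:ℤ) + β - γ) * x ^ (γ:ℤ))
      = ∑ d ∈ Finset.Ioc (-(m:ℤ)) ((m:ℤ)-1), c d * x ^ ((m:ℤ) - d + β) := by
  have hxper : ∀ a : ℤ, x ^ (a + (2*m:ℕ)) = x ^ a := by
    intro a
    rw [zpow_add₀ hx0, zpow_natCast, hx, mul_one]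
  have hsplit : ∑ d ∈ Finset.Ioc (-(m:ℤ)) ((m:ℤ)-1), c d * x ^ ((m:ℤ) - d + β)
      = (∑ d ∈ Finset.Ioc (-(m:ℤ)) ((β:ℤ)-m), c d * x ^ ((m:ℤ) - d + β)
          + ∑ d ∈ Finset.Ioc ((β:ℤ)-m) (β:ℤ), c d * x ^ ((m:ℤ) - d + β))
        + ∑ d ∈ Finset.Ioc (β:ℤ) ((m:ℤ)-1), c d * x ^ ((m:ℤ) - d + β) := by
    rw [sum_Ioc_consec_int _ (by omega : -(m:ℤ) ≤ (β:ℤ)-m) (by omega : (β:ℤ)-m ≤ (β:ℤ)),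
      sum_Ioc_consec_int _ (by omega : -(m:ℤ) ≤ (β:ℤ)) (by omega : (β:ℤ) ≤ (m:ℤ)-1)]
  rw [hsplit]
  have pieceA : ∑ d ∈ Finset.Ioc ((β:ℤ)-m) (β:ℤ), c d * x ^ ((m:ℤ) - d + β)
      = ∑ α ∈ Finset.range m, c ((β:ℤ) - α) * x ^ ((α:ℤ) + m) := by
    have h := sum_Ioc_int' (fun d => c d * x ^ ((m:ℤ) - d + β)) ((β:ℤ)-m) m
    rw [show ((β:ℤ)-(m:ℤ)+(m:ℕ)) = (β:ℤ) by push_cast; ring] at h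
    rw [h, ← Finset.sum_range_reflect (fun α => c ((β:ℤ) - α) * x ^ ((α:ℤ) + m)) m]
    refine Finset.sum_congr rfl fun s hs => ?_
    rw [Finset.mem_range] at hs
    have e1 : ((m - 1 - s : ℕ) : ℤ) = (m:ℤ)-1-s := by omega
    simp only [e1]
    have e2 : (β:ℤ) - ((m:ℤ)-1-s) = (β:ℤ) - m + 1 + s := by ring
    have e3 : ((m:ℤ)-1-s) + m = (m:ℤ) - ((β:ℤ)-m+1+s) + β := by ring
    rw [e2, e3]
  have pieceB : ∑ d ∈ Finset.Ioc (-(m:ℤ)) ((β:ℤ)-m), c d * x ^ ((m:ℤ) - d + β)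
      = ∑ γ ∈ Finset.range β, c ((m:ℤ) + β - γ) * x ^ (γ:ℤ) := by
    have h := sum_Ioc_int' (fun d => c d * x ^ ((m:ℤ) - d + β)) (-(m:ℤ)) β
    rw [show (-(m:ℤ)+(β:ℕ)) = (β:ℤ)-m by push_cast; ring] at h
    rw [h, ← Finset.sum_range_reflect (fun γ => c ((m:ℤ) + β - γ) * x ^ (γ:ℤ)) β]
    refine Finset.sum_congr rfl fun s hs => ?_
    rw [Finset.mem_range] at hs
    have e1 : ((β - 1 - s : ℕ) : ℤ) = (β:ℤ)-1-s := by omega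
    simp only [e1]
    have e3 : c (-(m:ℤ) + 1 + s) = c ((m:ℤ) + β - ((β:ℤ)-1-s)) := by
      have e2 : ((m:ℤ) + β - ((β:ℤ)-1-s)) = (-(m:ℤ) + 1 + s) + (2*m:ℕ) := by push_cast; ring
      rw [e2, hc]
    have e4 : (m:ℤ) - (-(m:ℤ)+1+s) + β = ((β:ℤ)-1-s) + (2*m:ℕ) := by push_cast; ring
    rw [e3, e4, hxper]
  have pieceC : ∑ d ∈ Finset.Ioc (β:ℤ) ((m:ℤ)-1), c d * x ^ ((m:ℤ) - d + β)
      = ∑ γ ∈ Finset.Ico (β+1) m, c ((m:ℤ) + β - γ) * x ^ (γ:ℤ) := by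
    have h := sum_Ioc_int' (fun d => c d * x ^ ((m:ℤ) - d + β)) (β:ℤ) (m-1-β)
    rw [show ((β:ℤ)+((m-1-β:ℕ):ℤ)) = (m:ℤ)-1 by omega] at h
    rw [h, Finset.sum_Ico_eq_sum_range]
    have hn : m - (β+1) = m - 1 - β := by omega
    rw [hn]
    rw [← Finset.sum_range_reflect
      (fun s => c ((β:ℤ) + 1 + s) * x ^ ((m:ℤ) - ((β:ℤ)+1+s) + β)) (m-1-β)]
    refine Finset.sum_congr rfl fun s hs => ?_
    rw [Finset.mem_range] at hs
    have e1 : ((m - 1 - β - 1 - s : ℕ) : ℤ) = (m:ℤ)-1-β-1-s := by omega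
    simp only [e1]
    have e3 : (m:ℤ) - ((β:ℤ) + 1 + ((m:ℤ)-1-β-1-s)) + β = (β:ℤ)+1+s := by ring
    have e2 : (β:ℤ) + 1 + ((m:ℤ)-1-β-1-s) = (m:ℤ) + β - ((β:ℤ)+1+s) := by ring
    have e4 : (((β+1+s : ℕ)) : ℤ) = (β:ℤ)+1+s := by omega
    rw [e3, e2, e4]
  have hgsplit : ∑ γ ∈ Finset.range m, (if γ = β then 0 else c ((m:ℤ) + β - γ) * x ^ (γ:ℤ))
      = ∑ γ ∈ Finset.range β, c ((m:ℤ) + β - γ) * x ^ (γ:ℤ)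
        + ∑ γ ∈ Finset.Ico (β+1) m, c ((m:ℤ) + β - γ) * x ^ (γ:ℤ) := by
    rw [Finset.range_eq_Ico,
      ← Finset.sum_Ico_consecutive _ (Nat.zero_le β) (Nat.le_of_lt hβ),
      Finset.sum_eq_sum_Ico_succ_bot hβ, if_pos rfl, zero_add, ← Finset.range_eq_Ico]
    congr 1
    · refine Finset.sum_congr rfl fun γ hγ => ?_
      rw [Finset.mem_range] at hγ
      rw [if_neg (by omega)]
    · refine Finset.sum_congr rfl fun γ hγ => ?_
      rw [Finset.mem_Ico] at hγ
      rw [if_neg (by omega)]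
  rw [hgsplit, pieceA.symm, pieceB.symm, pieceC.symm]
  ring

end Helpers

theorem stmt_10 (m : ℕ) (hm : 1 ≤ m) (k : Fin m → ℕ)
    (hmono : StrictMono k) (hk : ∀ j, k j ≤ 2 * m - 1)
    (z : ℂ) (hz : z = Complex.exp (Real.pi * Complex.I / m))
    (W : Matrix (Fin m) (Fin m) ℂ)
    (hW : W = (Matrix.vandermonde (fun j : Fin m => z ^ k j))ᵀ)
    (B : Matrix (Fin m) (Fin m) ℂ)
    (hB : B = W * Matrix.diagonal (fun j : Fin m => ((-1 : ℂ)) ^ k j) * W⁻¹)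
    (P : Matrix (Fin m) (Fin m) ℂ)
    (hP : P = Matrix.of (fun β α : Fin m => 1 / (1 + z ^ ((β : ℤ) - (α : ℤ))))) :
    (P * B).trace = (m : ℂ) * (2 * m - 1) / 2 - ∑ j, (k j : ℂ) := by
  have hm0 : (m:ℂ) ≠ 0 := Nat.cast_ne_zero.mpr (by omega)
  have h2m : (2*m : ℕ) ≠ 0 := by omega
  have hz0 : z ≠ 0 := by rw [hz]; exact Complex.exp_ne_zero _
  have hprim : IsPrimitiveRoot z (2*m) := by
    have hzeq : z = Complex.exp (2 * Real.pi * Complex.I / ((2*m : ℕ):ℂ)) := by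
      rw [hz]; congr 1; push_cast; field_simp
    rw [hzeq]; exact Complex.isPrimitiveRoot_exp (2*m) h2m
  have hz2m : z ^ (2*m) = 1 := hprim.pow_eq_one
  have hzm : z ^ m = -1 := by
    rw [hz, ← Complex.exp_nat_mul,
      show (m:ℂ) * (↑Real.pi * Complex.I / m) = ↑Real.pi * Complex.I by field_simp,
      Complex.exp_pi_mul_I]
  have hdvd : ∀ a : ℤ, z ^ a = 1 ↔ (2*m : ℤ) ∣ a := by
    intro a
    have := hprim.zpow_eq_one_iff_dvd a
    rwa [show ((2*m : ℕ) : ℤ) = (2*m : ℤ) by push_cast; ring] at this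
  have hvinj : Function.Injective (fun j : Fin m => z ^ (k j)) := by
    intro i j hij
    simp only at hij
    have h1 : z ^ ((k i : ℤ) - (k j : ℤ)) = 1 := by
      rw [zpow_sub₀ hz0, zpow_natCast, zpow_natCast, hij, div_self]
      exact pow_ne_zero _ hz0
    rcases (hdvd _).mp h1 with ⟨c, hc⟩
    have hki := hk i; have hkj := hk j
    have hkij : k i = k j := by
      have hki' : (k i : ℤ) ≤ 2*m - 1 := by omega
      have hkj' : (k j : ℤ) ≤ 2*m - 1 := by omega
      have h0i : (0:ℤ) ≤ k i := Int.natCast_nonneg _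
      have h0j : (0:ℤ) ≤ k j := Int.natCast_nonneg _
      have hm1 : (1:ℤ) ≤ m := by omega
      rcases lt_trichotomy c 0 with h'|h'|h'
      · exfalso
        have h1c : c ≤ -1 := by omega
        have hb : (2*(m:ℤ))*c ≤ -(2*(m:ℤ)) := by nlinarith
        linarith
      · rw [h', mul_zero] at hc; omega
      · exfalso
        have h1c : 1 ≤ c := by omega
        have hb : (2*(m:ℤ)) ≤ 2*(m:ℤ)*c := by nlinarith
        linarith
    exact hmono.injective hkij
  have hdet : IsUnit W.det := by
    rw [hW, Matrix.det_transpose, Matrix.det_vandermonde]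
    apply isUnit_iff_ne_zero.mpr
    apply Finset.prod_ne_zero_iff.mpr
    intro i _
    apply Finset.prod_ne_zero_iff.mpr
    intro j hj
    rw [Finset.mem_Ioi] at hj
    exact sub_ne_zero.mpr (fun h => (ne_of_gt hj) (hvinj h))
  set N : Matrix (Fin m) (Fin m) ℂ :=
    Matrix.of (fun β γ : Fin m =>
      if (γ:ℕ) = (β:ℕ) then 0 else 1/(1 + z^((m:ℤ) + (β:ℕ) - (γ:ℕ)))) with hN
  set Φ : Fin m → ℂ := fun j => (2*(m:ℂ)-1)/2 - (k j) with hΦ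
  have key : P * W * Matrix.diagonal (fun j : Fin m => ((-1 : ℂ)) ^ k j)
      = W * Matrix.diagonal Φ - N * W := by
    ext β j
    rw [Matrix.mul_diagonal, Matrix.sub_apply, Matrix.mul_diagonal, Matrix.mul_apply,
      Matrix.mul_apply]
    set x : ℂ := z ^ (k j) with hxdef
    have hx0 : x ≠ 0 := pow_ne_zero _ hz0
    have hx2m : x ^ (2*m) = 1 := by
      rw [hxdef, ← pow_mul, mul_comm (k j) (2*m), pow_mul, hz2m, one_pow]
    have hxm : x ^ m = (-1:ℂ) ^ (k j) := by
      rw [hxdef, ← pow_mul, mul_comm (k j) m, pow_mul, hzm]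
    have hcper : ∀ d : ℤ, (fun d : ℤ => 1/(1 + z^d)) (d + (2*m:ℕ)) = (fun d : ℤ => 1/(1 + z^d)) d := by
      intro d
      simp only
      rw [zpow_add₀ hz0, zpow_natCast, hz2m, mul_one]
    have hL1 := L1 m hm (fun d : ℤ => 1/(1 + z^d)) x hx0 hx2m hcper (β:ℕ) β.isLt
    have hL2 := L2 m hm z hz0 hz2m hzm hdvd (k j) (by have := hk j; omega)
    rw [← hxdef] at hL2
    have hWe : ∀ γ : Fin m, W γ j = x ^ (γ:ℕ) := by
      intro γ
      rw [hW, Matrix.transpose_apply, Matrix.vandermonde_apply, hxdef]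
    have s1 : (∑ α : Fin m, P β α * W α j) * ((-1:ℂ)) ^ k j
        = ∑ α ∈ Finset.range m, 1/(1 + z^(((β:ℕ):ℤ) - ((α:ℕ):ℤ))) * x ^ (((α:ℕ):ℤ) + (m:ℤ)) := by
      rw [Finset.sum_mul,
        ← Fin.sum_univ_eq_sum_range
          (fun a : ℕ => 1/(1 + z^(((β:ℕ):ℤ) - ((a:ℕ):ℤ))) * x ^ (((a:ℕ):ℤ) + (m:ℤ))) m]
      refine Finset.sum_congr rfl fun α _ => ?_
      rw [hP]
      simp only [Matrix.of_apply]
      rw [hWe α, zpow_add₀ hx0, zpow_natCast, zpow_natCast, hxm]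
      ring
    have s2 : W β j * Φ j
        = ∑ d ∈ Finset.Ioc (-(m:ℤ)) ((m:ℤ)-1), 1/(1 + z^d) * x ^ ((m:ℤ) - d + (β:ℕ)) := by
      rw [hWe β, hΦ]
      simp only
      rw [← hL2, Finset.mul_sum]
      refine Finset.sum_congr rfl fun d _ => ?_
      rw [zpow_add₀ hx0, zpow_natCast]
      ring
    have s3 : ∑ γ : Fin m, N β γ * W γ j
        = ∑ γ ∈ Finset.range m,
            (if γ = (β:ℕ) then 0 else 1/(1 + z^((m:ℤ) + ((β:ℕ):ℤ) - ((γ:ℕ):ℤ))) * x ^ ((γ:ℕ):ℤ)) := by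
      rw [← Fin.sum_univ_eq_sum_range
        (fun g : ℕ => if g = (β:ℕ) then 0 else 1/(1 + z^((m:ℤ) + ((β:ℕ):ℤ) - ((g:ℕ):ℤ))) * x ^ ((g:ℕ):ℤ)) m]
      refine Finset.sum_congr rfl fun γ _ => ?_
      rw [hN]
      simp only [Matrix.of_apply]
      rw [hWe γ]
      by_cases h : (γ:ℕ) = (β:ℕ)
      · rw [if_pos h, if_pos h, zero_mul]
      · rw [if_neg h, if_neg h, zpow_natCast]
    rw [s1, s2, s3]
    linear_combination hL1
  have hPB : P * B = W * Matrix.diagonal Φ * W⁻¹ - N := by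
    rw [hB, ← Matrix.mul_assoc, ← Matrix.mul_assoc, key, Matrix.sub_mul,
      Matrix.mul_assoc N W W⁻¹, Matrix.mul_nonsing_inv _ hdet, Matrix.mul_one]
  have htrN : N.trace = 0 := by
    rw [Matrix.trace]
    apply Finset.sum_eq_zero
    intro β _
    simp [hN, Matrix.diag]
  rw [hPB, Matrix.trace_sub, Matrix.trace_mul_comm, ← Matrix.mul_assoc,
    Matrix.nonsing_inv_mul _ hdet, Matrix.one_mul, Matrix.trace_diagonal, htrN, sub_zero, hΦ]
  rw [Finset.sum_sub_distrib, Finset.sum_const, Finset.card_univ, Fintype.card_fin,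
    nsmul_eq_mul]
  ring
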